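/- arXiv:1409.1176 — 2 statements merged into one kernel-verified Lean document; each statement's English description precedes it below -/
import Mathlib

section
/- If A and B are 4×4 complex Hadamard matrices in dephased form, tr(A) = tr(B), and this common trace is a real number, then A and B are spectrally equivalent, i.e. the characteristic polynomial of A equals the characteristic polynomial of B. -/
open Matrix Polynomial Complex

/-- A 4×4 complex Hadamard matrix: unitary with all entries of absolute value `1/√4`. -/
def IsHadamard (H : Matrix (Fin 4) (Fin 4) ℂ) : Prop :=
  H * Hᴴ = 1 ∧ Hᴴ * H = 1 ∧ ∀ i j, ‖H i j‖ = 1 / Real.sqrt 4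

/-- Dephased form: all entries of the 0th row and 0th column equal `1/√4`. -/
def IsDephased (H : Matrix (Fin 4) (Fin 4) ℂ) : Prop :=
  (∀ j, H 0 j = ((1 / Real.sqrt 4 : ℝ) : ℂ)) ∧ (∀ i, H i 0 = ((1 / Real.sqrt 4 : ℝ) : ℂ))

lemma sqrt4 : Real.sqrt 4 = 2 := by
  rw [show (4:ℝ) = 2^2 by norm_num, Real.sqrt_sq (by norm_num)]

section
variable (A : Matrix (Fin 4) (Fin 4) ℂ)

lemma entries0 (hA' : IsDephased A) : (∀ j, A 0 j = 1/2) ∧ (∀ i, A i 0 = 1/2) := by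
  obtain ⟨h1, h2⟩ := hA'
  constructor <;> intro k <;> [rw [h1 k]; rw [h2 k]] <;> rw [sqrt4] <;> norm_num

lemma rowsum (hA : _root_.IsHadamard A) (hA' : IsDephased A) (i : Fin 4) :
    A i 0 + A i 1 + A i 2 + A i 3 = if i = 0 then 2 else 0 := by
  have h := congrFun (congrFun hA.1 i) 0
  simp only [Matrix.mul_apply, Matrix.one_apply, Matrix.conjTranspose_apply,
    Fin.sum_univ_four, (entries0 A hA').1] at h
  have hs : (star (1/2 : ℂ)) = 1/2 := by norm_num
  rw [hs] at h
  split_ifs with hi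
  · subst hi; rw [if_pos rfl] at h; linear_combination 2 * h
  · rw [if_neg hi] at h; linear_combination 2 * h

lemma colsum (hA : _root_.IsHadamard A) (hA' : IsDephased A) (j : Fin 4) :
    A 0 j + A 1 j + A 2 j + A 3 j = if j = 0 then 2 else 0 := by
  have h := congrFun (congrFun hA.2.1 0) j
  simp only [Matrix.mul_apply, Matrix.one_apply, Matrix.conjTranspose_apply,
    Fin.sum_univ_four, (entries0 A hA').2] at h
  have hs : (star (1/2 : ℂ)) = 1/2 := by norm_num
  rw [hs] at h
  split_ifs with hi
  · subst hi; rw [if_pos rfl] at h; linear_combination 2 * h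
  · rw [if_neg (fun e => hi e.symm)] at h; linear_combination 2 * h

lemma normfact (hA : _root_.IsHadamard A) (i j : Fin 4) :
    A i j * (starRingEnd ℂ) (A i j) = 1/4 := by
  rw [Complex.mul_conj]
  rw [show Complex.normSq (A i j) = (‖A i j‖)^2 from (Complex.sq_norm _).symm]
  rw [hA.2.2 i j, sqrt4]
  norm_num

end

lemma eval_charpoly' (M : Matrix (Fin 4) (Fin 4) ℂ) (x : ℂ) :
    (M.charpoly).eval x = (x • (1 : Matrix (Fin 4) (Fin 4) ℂ) - M).det := by
  rw [Matrix.charpoly, ← Polynomial.coe_evalRingHom, RingHom.map_det]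
  congr 1
  ext i j
  by_cases h : i = j
  · subst h; simp [charmatrix_apply_eq, Matrix.one_apply]
  · simp [charmatrix_apply_ne _ _ _ h, Matrix.one_apply, h]

section
variable (A : Matrix (Fin 4) (Fin 4) ℂ)

lemma eval_pm_one (hA : _root_.IsHadamard A) (hA' : IsDephased A) (ε : ℂ) (hε : ε = 1 ∨ ε = -1) :
    (A.charpoly).eval ε = 0 := by
  rw [eval_charpoly']
  rw [← Matrix.exists_mulVec_eq_zero_iff]
  refine ⟨(fun i => if i = 0 then ε + 2 else ε), ?_, ?_⟩
  · intro h0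
    have h1 := congrFun h0 1
    simp only [Pi.zero_apply, if_neg (show (1:Fin 4) ≠ 0 by decide)] at h1
    rcases hε with rfl | rfl <;> simp at h1
  · rw [Matrix.sub_mulVec, Matrix.smul_mulVec, Matrix.one_mulVec]
    funext i
    have hr := rowsum A hA hA' i
    have h0 := (entries0 A hA').2 i
    simp only [Pi.sub_apply, Pi.smul_apply, smul_eq_mul, Matrix.mulVec, dotProduct,
      Fin.sum_univ_four, Pi.zero_apply, if_pos rfl,
      if_neg (show (1:Fin 4) ≠ 0 by decide), if_neg (show (2:Fin 4) ≠ 0 by decide),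
      if_neg (show (3:Fin 4) ≠ 0 by decide)]
    split_ifs at hr ⊢ with hi
    all_goals rcases hε with rfl | rfl <;>
      first
      | linear_combination 2*hr
      | linear_combination hr - 2*h0
      | linear_combination -hr - 2*h0
end

section
variable (A : Matrix (Fin 4) (Fin 4) ℂ)

lemma charpoly_form (hA : _root_.IsHadamard A) (hA' : IsDephased A) :
    A.charpoly = X^4 - C A.trace * X^3 - C (1 + A.det) * X^2 + C A.trace * X + C A.det := by
  have hdeg : A.charpoly.natDegree = 4 := by
    simpa using A.charpoly_natDegree_eq_dim
  have hmon := A.charpoly_monic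
  have hc4 : A.charpoly.coeff 4 = 1 := by
    have := hmon.coeff_natDegree
    rwa [hdeg] at this
  have hc3 : A.charpoly.coeff 3 = -A.trace := by
    have := A.trace_eq_neg_charpoly_coeff
    simp only [Fintype.card_fin] at this
    rw [show (4 - 1 : ℕ) = 3 from rfl] at this
    linear_combination this
  have hc0 : A.charpoly.coeff 0 = A.det := by
    have := A.det_eq_sign_charpoly_coeff
    simp only [Fintype.card_fin] at this
    rw [this]; ring
  have he1 := eval_pm_one A hA hA' 1 (Or.inl rfl)
  have he2 := eval_pm_one A hA hA' (-1) (Or.inr rfl)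
  rw [eval_eq_sum_range, hdeg] at he1 he2
  simp only [Finset.sum_range_succ, Finset.sum_range_zero, one_pow, mul_one, zero_add] at he1 he2
  have hpow : ∀ k : ℕ, ((-1 : ℂ))^k = if k % 2 = 0 then 1 else -1 := by
    intro k; rcases Nat.even_or_odd k with h | h
    · rw [h.neg_one_pow, if_pos (Nat.even_iff.mp h)]
    · rw [h.neg_one_pow, if_neg (by rw [Nat.odd_iff.mp h]; exact one_ne_zero)]
  simp only [hpow] at he2
  norm_num at he2
  have hc1 : A.charpoly.coeff 1 = A.trace := by
    linear_combination (he1 - he2) / 2 - hc3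
  have hc2 : A.charpoly.coeff 2 = -1 - A.det := by
    linear_combination (he1 + he2) / 2 - hc4 - hc0
  ext n
  match n with
  | 0 => simp [coeff_X_pow, coeff_C, coeff_C_mul, coeff_one, add_mul, coeff_add, hc0]
  | 1 => simp [coeff_X_pow, coeff_C, coeff_C_mul, coeff_one, add_mul, coeff_add, coeff_X, hc1]
  | 2 => simp [coeff_X_pow, coeff_C, coeff_C_mul, coeff_one, add_mul, coeff_add, coeff_X, hc2]; ring
  | 3 => simp [coeff_X_pow, coeff_C, coeff_C_mul, coeff_one, add_mul, coeff_add, coeff_X, hc3]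
  | 4 => simp [coeff_X_pow, coeff_C, coeff_C_mul, coeff_one, add_mul, coeff_add, coeff_X, hc4]
  | (m+5) =>
    rw [Polynomial.coeff_eq_zero_of_natDegree_lt (by omega : A.charpoly.natDegree < m + 5)]
    simp [coeff_X_pow, coeff_C, coeff_C_mul, coeff_one, add_mul, coeff_add, coeff_X, show ¬ (4 = m+5) by omega, show ¬ (3 = m+5) by omega,
      show ¬ (2 = m+5) by omega, show ¬ (1 = m+5) by omega, show ¬ (m+5 = 0) by omega]
end

section
variable (A : Matrix (Fin 4) (Fin 4) ℂ)

lemma conjT_hadamard (hA : _root_.IsHadamard A) : _root_.IsHadamard Aᴴ := by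
  refine ⟨?_, ?_, ?_⟩
  · rw [Matrix.conjTranspose_conjTranspose]; exact hA.2.1
  · rw [Matrix.conjTranspose_conjTranspose]; exact hA.1
  · intro i j
    rw [Matrix.conjTranspose_apply]
    rw [show (star (A j i) : ℂ) = (starRingEnd ℂ) (A j i) from rfl, Complex.norm_conj]
    exact hA.2.2 j i

lemma conjT_dephased (hA' : IsDephased A) : IsDephased Aᴴ := by
  constructor <;> intro k <;> rw [Matrix.conjTranspose_apply]
  · rw [hA'.2 k]; exact Complex.conj_ofReal _
  · rw [hA'.1 k]; exact Complex.conj_ofReal _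

lemma det_mul_conj (hA : _root_.IsHadamard A) : (starRingEnd ℂ) A.det * A.det = 1 := by
  have := congrArg Matrix.det hA.2.1
  rwa [Matrix.det_mul, Matrix.det_one, Matrix.det_conjTranspose] at this

lemma det_of_ne_zero (hA : _root_.IsHadamard A) (hA' : IsDephased A)
    (hreal : (A.trace).im = 0) (ht : A.trace ≠ 0) : A.det = -1 := by
  have htr : (starRingEnd ℂ) A.trace = A.trace := Complex.conj_eq_iff_im.mpr hreal
  have hid : Complex.I • (1 : Matrix (Fin 4) (Fin 4) ℂ) - Aᴴ = Aᴴ * (Complex.I • A - 1) := by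
    rw [Matrix.mul_sub, Matrix.mul_smul, hA.2.1, Matrix.mul_one]
  have hdet1 : (Complex.I • (1 : Matrix (Fin 4) (Fin 4) ℂ) - Aᴴ).det
      = Aᴴ.det * (Complex.I • A - 1).det := by rw [hid, Matrix.det_mul]
  have hid2 : Complex.I • A - 1 = Complex.I • (A - (-Complex.I) • (1 : Matrix (Fin 4) (Fin 4) ℂ)) := by
    rw [smul_sub, smul_smul]
    norm_num [Complex.I_mul_I]
  have hdet2 : (Complex.I • A - 1).det = ((-Complex.I) • (1 : Matrix (Fin 4) (Fin 4) ℂ) - A).det := by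
    rw [hid2, show A - (-Complex.I) • (1 : Matrix (Fin 4) (Fin 4) ℂ)
      = -((-Complex.I) • 1 - A) from (neg_sub _ _).symm, Matrix.det_smul, Matrix.det_neg]
    have h4 : (Complex.I)^4 = 1 := by
      rw [show (4:ℕ) = 2*2 from rfl, pow_mul, Complex.I_sq]; norm_num
    rw [Fintype.card_fin, h4]
    ring
  have hE : (Aᴴ.charpoly).eval Complex.I = Aᴴ.det * (A.charpoly).eval (-Complex.I) := by
    rw [eval_charpoly', eval_charpoly', hdet1, hdet2]
  rw [charpoly_form A hA hA', charpoly_form Aᴴ (conjT_hadamard A hA) (conjT_dephased A hA')] at hE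
  rw [Matrix.trace_conjTranspose, Matrix.det_conjTranspose] at hE
  rw [show (star A.trace : ℂ) = (starRingEnd ℂ) A.trace from rfl, htr] at hE
  rw [show (star A.det : ℂ) = (starRingEnd ℂ) A.det from rfl] at hE
  simp only [eval_add, eval_sub, eval_mul, eval_pow, eval_X, eval_C] at hE
  have hdd := det_mul_conj A hA
  set t := A.trace
  set d := A.det
  set d' := (starRingEnd ℂ) d with hd'
  have h4 : (Complex.I)^4 = 1 := by
    rw [show (4:ℕ) = 2*2 from rfl, pow_mul, Complex.I_sq]; norm_num
  have h3 : (Complex.I)^3 = -Complex.I := by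
    rw [show (3:ℕ) = 2+1 from rfl, pow_succ, Complex.I_sq]; ring
  have hn4 : (-Complex.I)^4 = 1 := by rw [Even.neg_pow (by decide)]; exact h4
  have hn3 : (-Complex.I)^3 = Complex.I := by rw [Odd.neg_pow (by decide), h3]; ring
  have hn2 : (-Complex.I)^2 = -1 := by rw [Even.neg_pow (by decide)]; exact Complex.I_sq
  rw [h4, h3, hn4, hn3, hn2, Complex.I_sq] at hE
  have hkey : (t * Complex.I) * (1 + d') = 0 := by
    linear_combination hE / 2 + hdd
  have hI : t * Complex.I ≠ 0 := mul_ne_zero ht Complex.I_ne_zero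
  have hd1 : d' = -1 := by
    rcases mul_eq_zero.mp hkey with h | h
    · exact absurd h hI
    · linear_combination h
  have hc := congrArg (starRingEnd ℂ) hd1
  rw [Complex.conj_conj] at hc
  rw [hc]
  simp
end

lemma cubic_lemma (a b c : ℂ) (ha : a * (starRingEnd ℂ) a = 1/4) (hb : b * (starRingEnd ℂ) b = 1/4)
    (hc : c * (starRingEnd ℂ) c = 1/4) (h : a + b + c = -(1/2)) :
    (a = -(1/2) ∧ c = -b) ∨ (b = -(1/2) ∧ c = -a) ∨ (c = -(1/2) ∧ b = -a) := by
  have h' : (starRingEnd ℂ) a + (starRingEnd ℂ) b + (starRingEnd ℂ) c = -(1/2) := by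
    have h2 := congrArg (starRingEnd ℂ) h
    simp only [map_add, map_neg] at h2
    rwa [show (starRingEnd ℂ) (1/2 : ℂ) = 1/2 by norm_num [map_ofNat]] at h2
  have ha0 : a ≠ 0 := by intro h0; rw [h0] at ha; norm_num at ha
  have hb0 : b ≠ 0 := by intro h0; rw [h0] at hb; norm_num at hb
  have hc0 : c ≠ 0 := by intro h0; rw [h0] at hc; norm_num at hc
  have he2 : b*c + a*c + a*b = -(2*(a*b*c)) := by
    have e1 : (starRingEnd ℂ) a = 1/(4*a) := by
      field_simp; linear_combination 4*ha
    have e2 : (starRingEnd ℂ) b = 1/(4*b) := by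
      field_simp; linear_combination 4*hb
    have e3 : (starRingEnd ℂ) c = 1/(4*c) := by
      field_simp; linear_combination 4*hc
    rw [e1, e2, e3] at h'
    field_simp at h'
    linear_combination h'/2
  have key : (a + 1/2) * ((b + 1/2) * (c + 1/2)) = 0 := by
    linear_combination he2/2 + h/4
  rcases mul_eq_zero.mp key with h1 | h1
  · left; constructor
    · linear_combination h1
    · linear_combination h - h1
  · rcases mul_eq_zero.mp h1 with h2 | h2
    · right; left; constructor
      · linear_combination h2
      · linear_combination h - h2
    · right; right; constructor
      · linear_combination h2
      · linear_combination h - h2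

section
variable (A : Matrix (Fin 4) (Fin 4) ℂ)

lemma perm_invariant (σ : Equiv.Perm (Fin 4)) (h0 : σ 0 = 0)
    (hA : _root_.IsHadamard A) (hA' : IsDephased A) :
    _root_.IsHadamard (A.submatrix σ σ) ∧ IsDephased (A.submatrix σ σ)
      ∧ (A.submatrix σ σ).trace = A.trace ∧ (A.submatrix σ σ).det = A.det := by
  refine ⟨⟨?_, ?_, ?_⟩, ⟨?_, ?_⟩, ?_, ?_⟩
  · rw [Matrix.conjTranspose_submatrix, Matrix.submatrix_mul_equiv, hA.1,
      Matrix.submatrix_one_equiv]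
  · rw [Matrix.conjTranspose_submatrix, Matrix.submatrix_mul_equiv, hA.2.1,
      Matrix.submatrix_one_equiv]
  · intro i j; exact hA.2.2 (σ i) (σ j)
  · intro j; rw [Matrix.submatrix_apply, h0]; exact hA'.1 (σ j)
  · intro i; rw [Matrix.submatrix_apply, h0]; exact hA'.2 (σ i)
  · unfold Matrix.trace
    exact Equiv.sum_comp σ (fun i => A.diag i)
  · exact Matrix.det_submatrix_equiv_self σ A
end

lemma eta_fin_four (M : Matrix (Fin 4) (Fin 4) ℂ) :
    M = !![M 0 0, M 0 1, M 0 2, M 0 3;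
           M 1 0, M 1 1, M 1 2, M 1 3;
           M 2 0, M 2 1, M 2 2, M 2 3;
           M 3 0, M 3 1, M 3 2, M 3 3] := by
  ext i j
  fin_cases i <;> fin_cases j <;> rfl

section
variable (A : Matrix (Fin 4) (Fin 4) ℂ)

lemma core0 (hA : _root_.IsHadamard A) (hA' : IsDephased A) (ht : A.trace = 0)
    (h11 : A 1 1 = -(1/2)) : A.det = 1 := by
  have e0r := (entries0 A hA').1
  have e0c := (entries0 A hA').2
  have htr4 : A 0 0 + A 1 1 + A 2 2 + A 3 3 = 0 := by
    rw [← ht]; simp [Matrix.trace, Matrix.diag, Fin.sum_univ_four]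
  have hr1 : A 1 0 + A 1 1 + A 1 2 + A 1 3 = 0 := by simpa using rowsum A hA hA' 1
  have hr2 : A 2 0 + A 2 1 + A 2 2 + A 2 3 = 0 := by simpa using rowsum A hA hA' 2
  have hc1 : A 0 1 + A 1 1 + A 2 1 + A 3 1 = 0 := by simpa using colsum A hA hA' 1
  have hc2 : A 0 2 + A 1 2 + A 2 2 + A 3 2 = 0 := by simpa using colsum A hA hA' 2
  have hc3 : A 0 3 + A 1 3 + A 2 3 + A 3 3 = 0 := by simpa using colsum A hA hA' 3
  have h13 : A 1 3 = -(A 1 2) := by linear_combination hr1 - e0c 1 - h11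
  have h31 : A 3 1 = -(A 2 1) := by linear_combination hc1 - e0r 1 - h11
  have h33 : A 3 3 = -(A 2 2) := by linear_combination htr4 - e0r 0 - h11
  have h23 : A 2 3 = A 1 2 + A 2 2 - 1/2 := by linear_combination hc3 - e0r 3 - h13 - h33
  have h32 : A 3 2 = -(1/2) - A 1 2 - A 2 2 := by linear_combination hc2 - e0r 2
  have h21 : A 2 1 = -(A 1 2) - 2*(A 2 2) := by linear_combination hr2 - e0c 2 - h23
  have hcb := normfact A hA 1 2
  have n23 := normfact A hA 2 3
  have n32 := normfact A hA 3 2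
  rw [h23] at n23
  rw [h32] at n32
  have hconjhalf : (starRingEnd ℂ) (1/2 : ℂ) = 1/2 := by norm_num [map_ofNat]
  simp only [map_add, map_sub, map_neg, hconjhalf] at n23 n32
  have hs' : (starRingEnd ℂ) (A 1 2) + (starRingEnd ℂ) (A 2 2) = -(A 1 2 + A 2 2) := by
    linear_combination n32 - n23
  have hsq : (A 1 2 + A 2 2)^2 = 0 := by
    linear_combination -(n23 + n32)/2 + (A 1 2 + A 2 2) * hs'
  have h22 : A 2 2 = -(A 1 2) := by
    have := sq_eq_zero_iff.mp hsq
    linear_combination this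
  have h21' : A 2 1 = A 1 2 := by linear_combination h21 - 2*h22
  have h23' : A 2 3 = -(1/2) := by linear_combination h23 + h22
  have h32' : A 3 2 = -(1/2) := by linear_combination h32 - h22
  have h31' : A 3 1 = -(A 1 2) := by linear_combination h31 - h21'
  have h33' : A 3 3 = A 1 2 := by linear_combination h33 - h22
  -- orthogonality of rows 1 and 2 forces A 1 2 to be real
  have horth := congrFun (congrFun hA.1 1) 2
  simp only [Matrix.mul_apply, Matrix.conjTranspose_apply, Fin.sum_univ_four,
    Matrix.one_apply, if_neg (show (1 : Fin 4) ≠ 2 by decide)] at horth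
  rw [e0c 1, e0c 2, h11, h13, h21', h22, h23'] at horth
  simp only [Complex.star_def, map_neg, hconjhalf] at horth
  have hreb : (starRingEnd ℂ) (A 1 2) = A 1 2 := by
    linear_combination -2*horth - 2*hcb
  have hfact : (A 1 2 - 1/2) * (A 1 2 + 1/2) = 0 := by
    linear_combination hcb - (A 1 2) * hreb
  set b := A 1 2 with hbdef
  have hM : A = !![(1/2:ℂ), 1/2, 1/2, 1/2;
                   1/2, -(1/2), b, -b;
                   1/2, b, -b, -(1/2);
                   1/2, -b, -(1/2), b] := by
    rw [eta_fin_four A, e0r 0, e0r 1, e0r 2, e0r 3, e0c 1, e0c 2, e0c 3,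
      h11, h13, h21', h22, h23', h31', h32', h33', ← hbdef]
  rcases mul_eq_zero.mp hfact with hb | hb
  · have hb' : b = 1/2 := by linear_combination hb
    rw [hM, hb']
    simp [Matrix.det_succ_row_zero, Fin.sum_univ_succ, Fin.succAbove]
    norm_num
  · have hb' : b = -(1/2) := by linear_combination hb
    rw [hM, hb']
    simp [Matrix.det_succ_row_zero, Fin.sum_univ_succ, Fin.succAbove]
    norm_num
end

section
variable (A : Matrix (Fin 4) (Fin 4) ℂ)

lemma det_of_zero (hA : _root_.IsHadamard A) (hA' : IsDephased A) (ht : A.trace = 0) : A.det = 1 := by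
  have e0r := (entries0 A hA').1
  have htr4 : A 0 0 + A 1 1 + A 2 2 + A 3 3 = 0 := by
    rw [← ht]; simp [Matrix.trace, Matrix.diag, Fin.sum_univ_four]
  have hdsum : A 1 1 + A 2 2 + A 3 3 = -(1/2) := by linear_combination htr4 - e0r 0
  rcases cubic_lemma (A 1 1) (A 2 2) (A 3 3) (normfact A hA 1 1) (normfact A hA 2 2)
      (normfact A hA 3 3) hdsum with ⟨h, -⟩ | ⟨h, -⟩ | ⟨h, -⟩
  · exact core0 A hA hA' ht h
  · have h0 : (Equiv.swap (1 : Fin 4) 2) 0 = 0 :=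
      Equiv.swap_apply_of_ne_of_ne (by decide) (by decide)
    obtain ⟨hH, hD, hT, hDet⟩ := perm_invariant A (Equiv.swap (1 : Fin 4) 2) h0 hA hA'
    rw [← hDet]
    refine core0 _ hH hD (hT.trans ht) ?_
    rw [Matrix.submatrix_apply, Equiv.swap_apply_left]
    exact h
  · have h0 : (Equiv.swap (1 : Fin 4) 3) 0 = 0 :=
      Equiv.swap_apply_of_ne_of_ne (by decide) (by decide)
    obtain ⟨hH, hD, hT, hDet⟩ := perm_invariant A (Equiv.swap (1 : Fin 4) 3) h0 hA hA'
    rw [← hDet]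
    refine core0 _ hH hD (hT.trans ht) ?_
    rw [Matrix.submatrix_apply, Equiv.swap_apply_left]
    exact h
end


theorem real_trace_eq_implies_spectrally_equivalent
    (A B : Matrix (Fin 4) (Fin 4) ℂ)
    (hA : _root_.IsHadamard A) (hA' : IsDephased A)
    (hB : _root_.IsHadamard B) (hB' : IsDephased B)
    (htr : A.trace = B.trace) (hreal : (A.trace).im = 0) :
    A.charpoly = B.charpoly := by
  rw [charpoly_form A hA hA', charpoly_form B hB hB', htr]
  by_cases h0 : A.trace = 0
  · rw [det_of_zero A hA hA' h0, det_of_zero B hB hB' (htr ▸ h0)]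
  · rw [det_of_ne_zero A hA hA' hreal h0, det_of_ne_zero B hB hB' (htr ▸ hreal) (htr ▸ h0)]
end

section
/- If H is a 4×4 complex Hadamard matrix in dephased form all of whose entries are real, then the characteristic polynomial of H is one of: (X − 1)³·(X + 1), (X − 1)²·(X + 1)², or (X − 1)·(X + 1)·(X² + X + 1) (the latter corresponding to eigenvalues {1, −1, e^{2πi/3}, e^{4πi/3}}). -/
open Matrix Polynomial Complex

theorem det_fin_four' {R : Type*} [CommRing R] (M : Matrix (Fin 4) (Fin 4) R) :
    M.det =
      M 0 0 * (M 1 1 * (M 2 2 * M 3 3 - M 2 3 * M 3 2) - M 1 2 * (M 2 1 * M 3 3 - M 2 3 * M 3 1)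
        + M 1 3 * (M 2 1 * M 3 2 - M 2 2 * M 3 1))
    - M 0 1 * (M 1 0 * (M 2 2 * M 3 3 - M 2 3 * M 3 2) - M 1 2 * (M 2 0 * M 3 3 - M 2 3 * M 3 0)
        + M 1 3 * (M 2 0 * M 3 2 - M 2 2 * M 3 0))
    + M 0 2 * (M 1 0 * (M 2 1 * M 3 3 - M 2 3 * M 3 1) - M 1 1 * (M 2 0 * M 3 3 - M 2 3 * M 3 0)
        + M 1 3 * (M 2 0 * M 3 1 - M 2 1 * M 3 0))
    - M 0 3 * (M 1 0 * (M 2 1 * M 3 2 - M 2 2 * M 3 1) - M 1 1 * (M 2 0 * M 3 2 - M 2 2 * M 3 0)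
        + M 1 2 * (M 2 0 * M 3 1 - M 2 1 * M 3 0)) := by
  rw [Matrix.det_succ_row_zero]
  simp [Fin.sum_univ_succ, Matrix.det_fin_three, Fin.succAbove, Matrix.submatrix,
    show (Fin.succ 2 : Fin 4) = 3 from rfl, show (Fin.castSucc 2 : Fin 4) = 2 from rfl]
  ring

set_option maxHeartbeats 2000000 in
theorem charpoly_fin_four' {R : Type*} [CommRing R] (M : Matrix (Fin 4) (Fin 4) R) :
    M.charpoly =
      (X - C (M 0 0)) * ((X - C (M 1 1)) * ((X - C (M 2 2)) * (X - C (M 3 3)) - (-C (M 2 3)) * (-C (M 3 2))) - (-C (M 1 2)) * ((-C (M 2 1)) * (X - C (M 3 3)) - (-C (M 2 3)) * (-C (M 3 1))) + (-C (M 1 3)) * ((-C (M 2 1)) * (-C (M 3 2)) - (X - C (M 2 2)) * (-C (M 3 1))))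
      - (-C (M 0 1)) * ((-C (M 1 0)) * ((X - C (M 2 2)) * (X - C (M 3 3)) - (-C (M 2 3)) * (-C (M 3 2))) - (-C (M 1 2)) * ((-C (M 2 0)) * (X - C (M 3 3)) - (-C (M 2 3)) * (-C (M 3 0))) + (-C (M 1 3)) * ((-C (M 2 0)) * (-C (M 3 2)) - (X - C (M 2 2)) * (-C (M 3 0))))
      + (-C (M 0 2)) * ((-C (M 1 0)) * ((-C (M 2 1)) * (X - C (M 3 3)) - (-C (M 2 3)) * (-C (M 3 1))) - (X - C (M 1 1)) * ((-C (M 2 0)) * (X - C (M 3 3)) - (-C (M 2 3)) * (-C (M 3 0))) + (-C (M 1 3)) * ((-C (M 2 0)) * (-C (M 3 1)) - (-C (M 2 1)) * (-C (M 3 0))))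
      - (-C (M 0 3)) * ((-C (M 1 0)) * ((-C (M 2 1)) * (-C (M 3 2)) - (X - C (M 2 2)) * (-C (M 3 1))) - (X - C (M 1 1)) * ((-C (M 2 0)) * (-C (M 3 2)) - (X - C (M 2 2)) * (-C (M 3 0))) + (-C (M 1 2)) * ((-C (M 2 0)) * (-C (M 3 1)) - (-C (M 2 1)) * (-C (M 3 0)))) := by
  rw [Matrix.charpoly, det_fin_four']
  simp only [charmatrix_apply_eq,
    charmatrix_apply_ne _ _ _ (by decide : (0:Fin 4) ≠ 1),
    charmatrix_apply_ne _ _ _ (by decide : (0:Fin 4) ≠ 2),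
    charmatrix_apply_ne _ _ _ (by decide : (0:Fin 4) ≠ 3),
    charmatrix_apply_ne _ _ _ (by decide : (1:Fin 4) ≠ 0),
    charmatrix_apply_ne _ _ _ (by decide : (1:Fin 4) ≠ 2),
    charmatrix_apply_ne _ _ _ (by decide : (1:Fin 4) ≠ 3),
    charmatrix_apply_ne _ _ _ (by decide : (2:Fin 4) ≠ 0),
    charmatrix_apply_ne _ _ _ (by decide : (2:Fin 4) ≠ 1),
    charmatrix_apply_ne _ _ _ (by decide : (2:Fin 4) ≠ 3),
    charmatrix_apply_ne _ _ _ (by decide : (3:Fin 4) ≠ 0),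
    charmatrix_apply_ne _ _ _ (by decide : (3:Fin 4) ≠ 1),
    charmatrix_apply_ne _ _ _ (by decide : (3:Fin 4) ≠ 2)]

theorem half_or_neg_half (z : ℂ) (him : z.im = 0) (habs : ‖z‖ = 1/2) :
    z = (1/2 : ℂ) ∨ z = -(1/2 : ℂ) := by
  have hz : z = ((z.re : ℝ) : ℂ) := Complex.ext rfl (by simp [him])
  rw [hz, Complex.norm_real, Real.norm_eq_abs] at habs
  rcases abs_eq (by norm_num : (0:ℝ) ≤ 1/2) |>.mp habs with h | h <;>
    [left; right] <;> rw [hz, h] <;> norm_num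

set_option maxHeartbeats 4000000 in
theorem real_hadamard_charpoly
    (H : Matrix (Fin 4) (Fin 4) ℂ)
    (hH : _root_.IsHadamard H) (hd : IsDephased H)
    (hreal : ∀ i j, (H i j).im = 0) :
    H.charpoly = (X - 1) ^ 3 * (X + 1) ∨
    H.charpoly = (X - 1) ^ 2 * (X + 1) ^ 2 ∨
    H.charpoly = (X - 1) * (X + 1) * (X ^ 2 + X + 1) := by
  obtain ⟨hU, -, habs⟩ := hH
  obtain ⟨hrow, hcol⟩ := hd
  have h4 : Real.sqrt 4 = 2 := by
    rw [show (4:ℝ) = 2^2 by norm_num, Real.sqrt_sq (by norm_num : (0:ℝ) ≤ 2)]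
  have h0 : ∀ j, H 0 j = (1/2 : ℂ) := fun j => by rw [hrow j, h4]; push_cast; ring
  have hc : ∀ i, H i 0 = (1/2 : ℂ) := fun i => by rw [hcol i, h4]; push_cast; ring
  have key : ∀ i j, H i j = (1/2 : ℂ) ∨ H i j = -(1/2 : ℂ) := fun i j =>
    half_or_neg_half _ (hreal i j) (by rw [habs i j, h4])
  have hconj : ∀ i j, star (H i j) = H i j := fun i j =>
    Complex.conj_eq_iff_im.mpr (hreal i j)
  have E : ∀ i k : Fin 4, H i 0 * H k 0 + H i 1 * H k 1 + H i 2 * H k 2 + H i 3 * H k 3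
      = if i = k then 1 else 0 := by
    intro i k
    have h := congrFun (congrFun hU i) k
    rw [Matrix.mul_apply, Fin.sum_univ_four] at h
    simp only [Matrix.conjTranspose_apply, hconj, Matrix.one_apply] at h
    exact h
  have E10 := E 1 0; have E20 := E 2 0; have E30 := E 3 0
  have E12 := E 1 2; have E13 := E 1 3; have E23 := E 2 3
  simp only [h0, hc, if_neg (by decide : (1:Fin 4) ≠ 0), if_neg (by decide : (2:Fin 4) ≠ 0),
    if_neg (by decide : (3:Fin 4) ≠ 0), if_neg (by decide : (1:Fin 4) ≠ 2),
    if_neg (by decide : (1:Fin 4) ≠ 3), if_neg (by decide : (2:Fin 4) ≠ 3)]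
    at E10 E20 E30 E12 E13 E23
  have h2' : (C (1/2 : ℂ)) * 2 = 1 := by
    rw [show ((2:ℂ[X])) = C (2:ℂ) from (map_ofNat (C : ℂ →+* ℂ[X]) 2).symm, ← C_mul]
    norm_num
  rcases key 1 1 with h11 | h11 <;> rcases key 1 2 with h12 | h12 <;>
    rcases key 1 3 with h13 | h13 <;>
    try (norm_num [h11, h12, h13] at E10) <;>
  rcases key 2 1 with h21 | h21 <;> rcases key 2 2 with h22 | h22 <;>
    rcases key 2 3 with h23 | h23 <;>
    try (norm_num [h11, h12, h13, h21, h22, h23] at E20 <;> norm_num [h11, h12, h13, h21, h22, h23] at E12) <;>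
  rcases key 3 1 with h31 | h31 <;> rcases key 3 2 with h32 | h32 <;>
    rcases key 3 3 with h33 | h33 <;>
    try (norm_num [h11, h12, h13, h21, h22, h23, h31, h32, h33] at E30 <;> norm_num [h11, h12, h13, h21, h22, h23, h31, h32, h33] at E13 <;> norm_num [h11, h12, h13, h21, h22, h23, h31, h32, h33] at E23)
  all_goals
    rw [charpoly_fin_four' H]
    simp only [h0, hc, h11, h12, h13, h21, h22, h23, h31, h32, h33, map_neg]
    first
    | (left; linear_combination ((-2 : ℂ[X]) * X^3 + 8 * X * (C (1/2 : ℂ))^2 + 4 * X * (C (1/2 : ℂ)) + 2 * X - 8 * (C (1/2 : ℂ))^3 - 4 * (C (1/2 : ℂ))^2 - 2 * (C (1/2 : ℂ)) - 1) * h2')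
    | (right; left; linear_combination ((-4 : ℂ[X]) * X^2 * (C (1/2 : ℂ)) - 2 * X^2 + 8 * (C (1/2 : ℂ))^3 + 4 * (C (1/2 : ℂ))^2 + 2 * (C (1/2 : ℂ)) + 1) * h2')
    | (right; right; linear_combination (X^3 - 4 * X * (C (1/2 : ℂ))^2 - 2 * X * (C (1/2 : ℂ)) - X - 8 * (C (1/2 : ℂ))^3 - 4 * (C (1/2 : ℂ))^2 - 2 * (C (1/2 : ℂ)) - 1) * h2')
end
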